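/- Let A be a bialgebra over a commutative ring R and let x ∈ A be a grouplike element. There exists a normalized two-sided x-semi-invariant integral on A if and only if there exist an R-algebra C and an R-algebra isomorphism A* ≅ R × C (product of R-algebras) under which the projection of A* onto the first factor R equals χ, the evaluation at x (χ(f) = f(x)). -/

import Mathlib

open TensorProduct

/-- The convolution product on the dual `A* = Hom_R(A, R)` of a bialgebra `A`:
`(f * g)(a) = Σ f(a₍₁₎) · g(a₍₂₎)`. -/
noncomputable def conv {R A : Type*} [CommRing R] [Ring A] [Bialgebra R A]
    (f g : Module.Dual R A) : Module.Dual R A :=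
  LinearMap.mul' R R ∘ₗ TensorProduct.map f g ∘ₗ Coalgebra.comul

section Aux
open Coalgebra
variable {R : Type*} {A : Type*} [CommRing R] [Ring A] [Bialgebra R A]

lemma conv_repr (f g : Module.Dual R A) (a : A) {ι : Type*} (r : Coalgebra.Repr R a ι) :
    conv f g a = ∑ i ∈ r.index, f (r.left i) * g (r.right i) := by
  simp only [conv, LinearMap.comp_apply, ← r.eq, map_sum, TensorProduct.map_tmul,
    LinearMap.mul'_apply]

lemma conv_assoc (f g h : Module.Dual R A) : conv (conv f g) h = conv f (conv g h) := by
  ext a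
  have key := Coalgebra.sum_tmul_tmul_eq (ℛ R a) (fun i => ℛ R ((ℛ R a).left i))
    (fun i => ℛ R ((ℛ R a).right i))
  apply_fun (LinearMap.mul' R R ∘ₗ
    TensorProduct.map f (LinearMap.mul' R R ∘ₗ TensorProduct.map g h)) at key
  simp only [map_sum, LinearMap.comp_apply, TensorProduct.map_tmul, LinearMap.mul'_apply] at key
  rw [conv_repr _ _ a (ℛ R a), conv_repr _ _ a (ℛ R a)]
  simp_rw [conv_repr f g _ (ℛ R _), conv_repr g h _ (ℛ R _), Finset.sum_mul, Finset.mul_sum,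
    mul_assoc]
  exact key

lemma conv_counit_left (f : Module.Dual R A) : conv Coalgebra.counit f = f := by
  ext a
  have := Coalgebra.sum_counit_tmul_map_eq (R := R) f a (repr := ℛ R a)
  apply_fun LinearMap.mul' R R at this
  rw [conv_repr _ _ a (ℛ R a)]
  simp only [map_sum, LinearMap.mul'_apply, one_mul] at this
  exact this

lemma conv_counit_right (f : Module.Dual R A) : conv f Coalgebra.counit = f := by
  ext a
  have := Coalgebra.sum_map_tmul_counit_eq (R := R) f a (repr := ℛ R a)
  apply_fun LinearMap.mul' R R at this
  rw [conv_repr _ _ a (ℛ R a)]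
  simp only [map_sum, LinearMap.mul'_apply, mul_one] at this
  exact this

lemma conv_add_left (f f' g : Module.Dual R A) :
    conv (f + f') g = conv f g + conv f' g := by
  ext a
  simp [conv_repr _ _ a (ℛ R a), add_mul, Finset.sum_add_distrib]

lemma conv_add_right (f g g' : Module.Dual R A) :
    conv f (g + g') = conv f g + conv f g' := by
  ext a
  simp [conv_repr _ _ a (ℛ R a), mul_add, Finset.sum_add_distrib]

lemma conv_smul_left (r : R) (f g : Module.Dual R A) :
    conv (r • f) g = r • conv f g := by
  ext a
  simp [conv_repr _ _ a (ℛ R a), Finset.mul_sum, mul_assoc]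

lemma conv_smul_right (r : R) (f g : Module.Dual R A) :
    conv f (r • g) = r • conv f g := by
  ext a
  simp [conv_repr _ _ a (ℛ R a), Finset.mul_sum, mul_left_comm]

lemma conv_sub_left (f f' g : Module.Dual R A) :
    conv (f - f') g = conv f g - conv f' g := by
  have := conv_add_left (f - f') f' g
  rw [sub_add_cancel] at this
  rw [this]; abel

lemma conv_sub_right (f g g' : Module.Dual R A) :
    conv f (g - g') = conv f g - conv f g' := by
  have := conv_add_right f (g - g') g'
  rw [sub_add_cancel] at this
  rw [this]; abel

lemma conv_apply_grouplike {x : A} (hx : Coalgebra.comul (R := R) x = x ⊗ₜ[R] x)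
    (f g : Module.Dual R A) : conv f g x = f x * g x := by
  simp [conv, hx]

end Aux

/-- An element `x` of a bialgebra is grouplike if `Δ x = x ⊗ x` and `ε x = 1`. -/
def IsGroupLikeElem' (R : Type*) {A : Type*} [CommRing R] [Ring A] [Bialgebra R A]
    (x : A) : Prop :=
  Coalgebra.comul (R := R) x = x ⊗ₜ[R] x ∧ Coalgebra.counit (R := R) x = 1

/-- For `x` grouplike, a normalized two-sided `x`-semi-invariant integral on `A` is
`w ∈ A*` with `f * w = w * f = f(x) • w` for all `f ∈ A*` and `w(x) = 1`. -/
def IsNormalizedSemiInvIntegral {R A : Type*} [CommRing R] [Ring A] [Bialgebra R A]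
    (x : A) (w : Module.Dual R A) : Prop :=
  (∀ f : Module.Dual R A, conv f w = f x • w) ∧
  (∀ f : Module.Dual R A, conv w f = f x • w) ∧
  w x = 1

universe u v

section Fwd
variable {R : Type u} {A : Type v} [CommRing R] [Ring A] [Bialgebra R A]
  (x : A) (w : Module.Dual R A)

/-- The kernel of evaluation at `x`. -/
def kerEval : Submodule R (Module.Dual R A) := LinearMap.ker (Module.Dual.eval R A x)

lemma mem_kerEval {f : Module.Dual R A} : f ∈ kerEval x ↔ f x = 0 := by
  simp [kerEval, LinearMap.mem_ker]

variable (hx : IsGroupLikeElem' R x) (hw : IsNormalizedSemiInvIntegral x w)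

/-- Ring structure on `ker χ` with multiplication `conv` and unit `ε - w`. -/
noncomputable def kerEvalRing : Ring (kerEval (R := R) x) :=
  { (inferInstance : AddCommGroup (kerEval (R := R) x)) with
    mul := fun f g => ⟨conv f.1 g.1, by
      rw [mem_kerEval, conv_apply_grouplike hx.1, (mem_kerEval x).1 f.2, zero_mul]⟩
    one := ⟨Coalgebra.counit - w, by
      rw [mem_kerEval, LinearMap.sub_apply, hx.2, hw.2.2, sub_self]⟩
    mul_assoc := fun f g h => Subtype.ext (conv_assoc f.1 g.1 h.1)
    one_mul := fun f => Subtype.ext <| by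
      show conv (Coalgebra.counit - w) f.1 = f.1
      rw [conv_sub_left, conv_counit_left, hw.2.1, (mem_kerEval x).1 f.2, zero_smul, sub_zero]
    mul_one := fun f => Subtype.ext <| by
      show conv f.1 (Coalgebra.counit - w) = f.1
      rw [conv_sub_right, conv_counit_right, hw.1, (mem_kerEval x).1 f.2, zero_smul, sub_zero]
    left_distrib := fun f g h => Subtype.ext (conv_add_right f.1 g.1 h.1)
    right_distrib := fun f g h => Subtype.ext (conv_add_left f.1 g.1 h.1)
    zero_mul := fun f => Subtype.ext <| by
      show conv 0 f.1 = 0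
      have := conv_smul_left (0 : R) 0 f.1
      simpa using this
    mul_zero := fun f => Subtype.ext <| by
      show conv f.1 0 = 0
      have := conv_smul_right (0 : R) f.1 0
      simpa using this }

noncomputable def kerEvalAlgebra :
    @Algebra R (kerEval (R := R) x) _ (kerEvalRing x w hx hw).toSemiring :=
  letI := kerEvalRing x w hx hw
  @Algebra.ofModule R _ _ _ (kerEval (R := R) x).module
    (fun r f g => Subtype.ext (conv_smul_left r f.1 g.1))
    (fun r f g => Subtype.ext (conv_smul_right r f.1 g.1))

/-- The splitting `A* ≃ₗ R × ker χ`. -/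
noncomputable def dualSplit : Module.Dual R A ≃ₗ[R] R × kerEval (R := R) x :=
  LinearEquiv.ofLinear
    (LinearMap.prod (Module.Dual.eval R A x)
      (((LinearMap.id : Module.Dual R A →ₗ[R] _) -
        (Module.Dual.eval R A x).smulRight w).codRestrict (kerEval x) (fun f => by
          rw [mem_kerEval]
          simp [hw.2.2, mul_comm])))
    (LinearMap.coprod (LinearMap.toSpanSingleton R _ w) (kerEval x).subtype)
    (by
      ext p
      · simp [hw.2.2]
      · simp [LinearMap.codRestrict, hw.2.2]
      · simp [(mem_kerEval x).1 p.2]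
      · simp [LinearMap.codRestrict, (mem_kerEval x).1 p.2])
    (by
      ext f a
      simp [LinearMap.codRestrict])

end Fwd

section Main
variable {R : Type u} {A : Type v} [CommRing R] [Ring A] [Bialgebra R A]
  (x : A) (w : Module.Dual R A) (hx : IsGroupLikeElem' R x)
  (hw : IsNormalizedSemiInvIntegral x w)

lemma dualSplit_fst (f : Module.Dual R A) : (dualSplit x w hw f).1 = f x := rfl

lemma dualSplit_snd (f : Module.Dual R A) :
    ((dualSplit x w hw f).2 : Module.Dual R A) = f - f x • w := rfl

end Main

theorem semiinvariant_integral_iff_dual_splits (R : Type u) (A : Type v) [CommRing R]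
    [Ring A] [Bialgebra R A] (x : A) (hx : IsGroupLikeElem' R x) :
    (∃ w : Module.Dual R A, IsNormalizedSemiInvIntegral x w) ↔
    ∃ (C : Type (max u v)) (_ : Ring C) (_ : Algebra R C)
      (e : Module.Dual R A ≃ₗ[R] R × C),
        (∀ f g : Module.Dual R A, e (conv f g) = e f * e g) ∧
        e Coalgebra.counit = 1 ∧
        (∀ f : Module.Dual R A, (e f).1 = f x) := by
  constructor
  · rintro ⟨w, hw⟩
    letI := kerEvalRing x w hx hw
    letI := kerEvalAlgebra x w hx hw
    refine ⟨↥(kerEval x), kerEvalRing x w hx hw, kerEvalAlgebra x w hx hw,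
      dualSplit x w hw, ?_, ?_, fun f => rfl⟩
    · intro f g
      apply Prod.ext
      · show conv f g x = f x * g x
        exact conv_apply_grouplike hx.1 f g
      · apply Subtype.ext
        show conv f g - conv f g x • w = conv (f - f x • w) (g - g x • w)
        rw [conv_apply_grouplike hx.1]
        simp only [conv_sub_left, conv_sub_right, conv_smul_left, conv_smul_right,
          hw.1, hw.2.1, hw.2.2, one_smul, smul_smul, LinearMap.sub_apply, LinearMap.smul_apply,
          smul_eq_mul, mul_one, sub_self]
        module
    · apply Prod.ext
      · show Coalgebra.counit x = (1 : R)
        exact hx.2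
      · apply Subtype.ext
        show (Coalgebra.counit : Module.Dual R A) - Coalgebra.counit (R := R) x • w = _
        rw [hx.2, one_smul]
        rfl
  · rintro ⟨C, _, _, e, hmul, -, hfst⟩
    refine ⟨e.symm (1, 0), ?_, ?_, ?_⟩
    · intro f
      apply e.injective
      rw [hmul, e.apply_symm_apply, map_smul, e.apply_symm_apply]
      apply Prod.ext
      · show (e f).1 * 1 = f x • (1 : R)
        rw [hfst, mul_one, smul_eq_mul, mul_one]
      · show (e f).2 * 0 = f x • (0 : C)
        rw [mul_zero, smul_zero]
    · intro f
      apply e.injective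
      rw [hmul, e.apply_symm_apply, map_smul, e.apply_symm_apply]
      apply Prod.ext
      · show 1 * (e f).1 = f x • (1 : R)
        rw [hfst, one_mul, smul_eq_mul, mul_one]
      · show 0 * (e f).2 = f x • (0 : C)
        rw [zero_mul, smul_zero]
    · show e.symm (1, 0) x = 1
      rw [← hfst, e.apply_symm_apply]
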